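/- Let Q be a right Bol loop of order 27 with |Z(Q)| = 3. If N is a normal subloop of Q such that Q/N is an abelian group — that is, for all x,y,z ∈ Q there exist n,m ∈ N with y·x = (x·y)·n and x·(y·z) = ((x·y)·z)·m — then Z(Q) ⊆ N. -/

import Mathlib

/-- A loop: a set with binary operation and identity element in which all left and
right translations are bijective. -/
class QLoop (Q : Type*) extends Mul Q, One Q where
  one_mul : ∀ x : Q, 1 * x = x
  mul_one : ∀ x : Q, x * 1 = x
  bij_left : ∀ a : Q, Function.Bijective (fun x : Q => a * x)
  bij_right : ∀ a : Q, Function.Bijective (fun x : Q => x * a)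

/-- The right Bol identity. -/
def IsRightBol (Q : Type*) [QLoop Q] : Prop :=
  ∀ x y z : Q, ((x * y) * z) * y = x * ((y * z) * y)

/-- Left translation as a permutation. -/
noncomputable def Lt {Q : Type*} [QLoop Q] (a : Q) : Equiv.Perm Q :=
  Equiv.ofBijective (fun x : Q => a * x) (QLoop.bij_left a)

/-- Right translation as a permutation. -/
noncomputable def Rt {Q : Type*} [QLoop Q] (a : Q) : Equiv.Perm Q :=
  Equiv.ofBijective (fun x : Q => x * a) (QLoop.bij_right a)

/-- The right multiplication group. -/
noncomputable def rightMultGroup (Q : Type*) [QLoop Q] : Subgroup (Equiv.Perm Q) :=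
  Subgroup.closure (Set.range (Rt : Q → Equiv.Perm Q))

/-- The right inner mapping group, generated by R_{x,y} = R_{y x}⁻¹ ∘ R_x ∘ R_y. -/
noncomputable def rightInn (Q : Type*) [QLoop Q] : Subgroup (Equiv.Perm Q) :=
  Subgroup.closure { φ : Equiv.Perm Q | ∃ x y : Q, φ = (Rt (y * x))⁻¹ * Rt x * Rt y }

/-- The inner mapping group, generated by R_{x,y}, L_{x,y} and T_x. -/
noncomputable def innGroup (Q : Type*) [QLoop Q] : Subgroup (Equiv.Perm Q) :=
  Subgroup.closure
    ({ φ : Equiv.Perm Q | ∃ x y : Q, φ = (Rt (y * x))⁻¹ * Rt x * Rt y } ∪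
     { φ : Equiv.Perm Q | ∃ x y : Q, φ = (Lt (x * y))⁻¹ * Lt x * Lt y } ∪
     { φ : Equiv.Perm Q | ∃ x : Q, φ = (Lt x)⁻¹ * Rt x })

/-- A subloop: contains 1, closed under multiplication and both divisions. -/
structure IsSubloop {Q : Type*} [QLoop Q] (S : Set Q) : Prop where
  one_mem : (1 : Q) ∈ S
  mul_mem : ∀ ⦃a b : Q⦄, a ∈ S → b ∈ S → a * b ∈ S
  ldiv_mem : ∀ ⦃a x : Q⦄, a ∈ S → a * x ∈ S → x ∈ S
  rdiv_mem : ∀ ⦃a y : Q⦄, a ∈ S → y * a ∈ S → y ∈ S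

/-- A normal subloop: a subloop invariant under all inner mappings. -/
def IsNormalSubloop {Q : Type*} [QLoop Q] (S : Set Q) : Prop :=
  IsSubloop S ∧ ∀ φ ∈ innGroup Q, (φ : Equiv.Perm Q) '' S = S

/-- The commutant. -/
def commutant (Q : Type*) [QLoop Q] : Set Q := { a : Q | ∀ y : Q, a * y = y * a }

/-- The left nucleus. -/
def leftNucleus (Q : Type*) [QLoop Q] : Set Q :=
  { a : Q | ∀ y z : Q, a * (y * z) = (a * y) * z }

/-- The center. -/
def loopCenter (Q : Type*) [QLoop Q] : Set Q :=
  { a : Q | ∀ y z : Q, a * y = y * a ∧ a * (y * z) = (a * y) * z ∧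
      y * (a * z) = (y * a) * z ∧ y * (z * a) = (y * z) * a }

/-- Powers: x^0 = 1, x^{n+1} = x^n * x. -/
def lpow {Q : Type*} [QLoop Q] (x : Q) : ℕ → Q
  | 0 => 1
  | n + 1 => lpow x n * x

/-- The subloop generated by an element. -/
def subloopClosure {Q : Type*} [QLoop Q] (x : Q) : Set Q :=
  ⋂₀ { S : Set Q | IsSubloop S ∧ x ∈ S }

/-- Power associativity: the subloop generated by any element is associative. -/
def PowerAssociative (Q : Type*) [QLoop Q] : Prop :=
  ∀ x : Q, ∀ a ∈ subloopClosure x, ∀ b ∈ subloopClosure x, ∀ c ∈ subloopClosure x,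
    a * (b * c) = (a * b) * c

section Basics
variable {B : Type*} [QLoop B]

lemma q_one_mul (x : B) : 1 * x = x := QLoop.one_mul x
lemma q_mul_one (x : B) : x * 1 = x := QLoop.mul_one x

lemma mul_left_cancelQ (a : B) {x y : B} (h : a * x = a * y) : x = y :=
  (QLoop.bij_left a).1 h

lemma mul_right_cancelQ (a : B) {x y : B} (h : x * a = y * a) : y = x :=
  ((QLoop.bij_right a).1 h).symm

@[simp] lemma Rt_apply (a x : B) : Rt a x = x * a := rfl

lemma Rt_one : Rt (1 : B) = 1 := by
  ext x; simp [q_mul_one]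

lemma lpow_zero (x : B) : lpow x 0 = 1 := rfl
lemma lpow_succ (x : B) (n : ℕ) : lpow x (n+1) = lpow x n * x := rfl
lemma lpow_one' (x : B) : lpow x 1 = x := by
  show lpow x 0 * x = x
  rw [lpow_zero, q_one_mul]
lemma lpow_two (x : B) : lpow x 2 = x * x := by
  show lpow x 1 * x = x * x
  rw [lpow_one']
lemma lpow_three (x : B) : lpow x 3 = (x * x) * x := by
  show lpow x 2 * x = _
  rw [lpow_two]

end Basics

section Bol
variable {B : Type*} [QLoop B] (hbol : IsRightBol B)
include hbol

lemma bolR (y z : B) : Rt y * Rt z * Rt y = Rt ((y * z) * y) := by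
  ext x
  simp only [Equiv.Perm.mul_apply, Rt_apply]
  exact hbol x y z

lemma Rt_sq (x : B) : Rt (x * x) = Rt x * Rt x := by
  have h := bolR hbol x 1
  rw [q_mul_one, Rt_one] at h
  rw [← h]; group

lemma Rt_lpow (x : B) : ∀ n : ℕ, Rt (lpow x n) = (Rt x) ^ n := by
  have key : ∀ n : ℕ, (∀ m ≤ n, Rt (lpow x m) = (Rt x) ^ m) := by
    intro n
    induction n with
    | zero => intro m hm; interval_cases m; simp [lpow_zero, Rt_one]
    | succ n ih =>
      intro m hm
      rcases Nat.lt_or_ge m (n+1) with h | h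
      · exact ih m (Nat.lt_succ_iff.mp h)
      · have hm' : m = n + 1 := le_antisymm hm h
        subst hm'
        match n, ih with
        | 0, _ => simp [lpow_one', pow_one]
        | (k+1), ih =>
          have hx : x * lpow x k = lpow x (k+1) := by
            have h1 : x * lpow x k = Rt (lpow x k) x := rfl
            rw [h1, ih k (by omega)]
            have : ∀ j : ℕ, ((Rt x) ^ j) x = lpow x (j+1) := by
              intro j
              induction j with
              | zero => simp [lpow_one']
              | succ j hj =>
                rw [pow_succ', Equiv.Perm.mul_apply, hj]
                show lpow x (j+1) * x = _
                rfl
            exact this k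
          have h2 : lpow x (k+2) = (x * lpow x k) * x := by
            rw [hx]; rfl
          rw [h2, ← bolR hbol x (lpow x k), ih k (by omega)]
          group
  intro n; exact key n n le_rfl

lemma lpow_add (x : B) (m n : ℕ) : lpow x (m + n) = lpow x m * lpow x n := by
  have h1 : ∀ k : ℕ, lpow x (m + k) = ((Rt x) ^ k) (lpow x m) := by
    intro k
    induction k with
    | zero => simp [lpow_zero]
    | succ k ih =>
      have : m + (k+1) = (m+k) + 1 := by omega
      rw [this, lpow_succ, ih, pow_succ', Equiv.Perm.mul_apply]
      rfl
  rw [h1 n, ← Rt_lpow hbol]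
  rfl

lemma mul_lpow_add (u x : B) (m n : ℕ) :
    (u * lpow x m) * lpow x n = u * lpow x (m + n) := by
  calc (u * lpow x m) * lpow x n
      = ((Rt x)^n * (Rt x)^m) u := by
        rw [Equiv.Perm.mul_apply, ← Rt_lpow hbol, ← Rt_lpow hbol]; rfl
    _ = ((Rt x)^(m+n)) u := by rw [← pow_add, Nat.add_comm n m]
    _ = u * lpow x (m+n) := by rw [← Rt_lpow hbol]; rfl

lemma lpow_mul_self (x : B) {d : ℕ} (h : lpow x d = 1) (k : ℕ) : lpow x (k * d) = 1 := by
  induction k with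
  | zero => rw [Nat.zero_mul]; rfl
  | succ k ih =>
    have : (k+1) * d = k * d + d := by ring
    rw [this, lpow_add hbol, ih, h, q_one_mul]

lemma lpow_mod (x : B) {d : ℕ} (h : lpow x d = 1) (n : ℕ) :
    lpow x n = lpow x (n % d) := by
  conv_lhs => rw [show n = d * (n / d) + n % d from (Nat.div_add_mod n d).symm]
  rw [lpow_add hbol, show d * (n/d) = (n/d) * d from Nat.mul_comm _ _,
    lpow_mul_self hbol x h, q_one_mul]

end Bol

section Orbit
variable {B : Type*} [QLoop B] (hbol : IsRightBol B)
include hbol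

lemma exists_pos_order [Finite B] (x : B) : ∃ n, 0 < n ∧ lpow x n = 1 := by
  obtain ⟨a, b, hne, heq⟩ := Finite.exists_ne_map_eq_of_infinite (fun n : ℕ => lpow x n)
  rcases Nat.lt_or_ge a b with h | h
  · refine ⟨b - a, by omega, ?_⟩
    have : lpow x b = lpow x a * lpow x (b - a) := by
      rw [← lpow_add hbol]; congr 1; omega
    rw [heq] at this
    have h2 : lpow x b * 1 = lpow x b * lpow x (b-a) := by rw [q_mul_one]; exact this
    exact (mul_left_cancelQ _ h2).symm
  · have hlt : b < a := by omega
    refine ⟨a - b, by omega, ?_⟩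
    have : lpow x a = lpow x b * lpow x (a - b) := by
      rw [← lpow_add hbol]; congr 1; omega
    rw [heq] at this
    have h2 : lpow x b * 1 = lpow x b * lpow x (a-b) := by rw [q_mul_one]; exact this
    exact (mul_left_cancelQ _ h2).symm

lemma order_dvd_card [Finite B] (x : B) {d : ℕ} (hd : 0 < d) (h1 : lpow x d = 1)
    (hmin : ∀ m, 0 < m → m < d → lpow x m ≠ 1) : d ∣ Nat.card B := by
  classical
  -- helper: undo a power
  have undo : ∀ (y : B) (n : ℕ), (y * lpow x n) * lpow x (n * (d-1)) = y := by
    intro y n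
    rw [mul_lpow_add hbol]
    have hnd : n + n * (d-1) = n * d := by
      rcases d with _ | e
      · omega
      · simp [Nat.mul_succ, Nat.succ_sub_one]; ring
    rw [hnd, lpow_mul_self hbol x h1, q_mul_one]
  let s : Setoid B := ⟨fun y z => ∃ n, z = y * lpow x n, by
    constructor
    · intro y; exact ⟨0, (q_mul_one y).symm⟩
    · rintro y z ⟨n, rfl⟩
      exact ⟨n * (d-1), (undo y n).symm⟩
    · rintro y z w ⟨m, rfl⟩ ⟨n, rfl⟩
      exact ⟨m + n, (mul_lpow_add hbol y x m n)⟩⟩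
  have hpowinj : ∀ i j : ℕ, i < d → j < d → lpow x i = lpow x j → i = j := by
    intro i j hi hj hij
    rcases le_total i j with h | h
    · by_contra hne
      have : lpow x j = lpow x i * lpow x (j - i) := by
        rw [← lpow_add hbol]; congr 1; omega
      rw [← hij] at this
      have h2 : lpow x i * 1 = lpow x i * lpow x (j-i) := by rw [q_mul_one]; exact this
      have := (mul_left_cancelQ _ h2).symm
      exact hmin (j-i) (by omega) (by omega) this
    · by_contra hne
      have : lpow x i = lpow x j * lpow x (i - j) := by
        rw [← lpow_add hbol]; congr 1; omega
      rw [hij] at this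
      have h2 : lpow x j * 1 = lpow x j * lpow x (i-j) := by rw [q_mul_one]; exact this
      have := (mul_left_cancelQ _ h2).symm
      exact hmin (i-j) (by omega) (by omega) this
  have hbij : Function.Bijective
      (fun p : Quotient s × Fin d => p.1.out * lpow x p.2.val) := by
    constructor
    · rintro ⟨q, i⟩ ⟨q', j⟩ heq
      simp only at heq
      have hr : s.r q.out q'.out := by
        have h5 : q'.out = (q.out * lpow x i.val) * lpow x (j.val*(d-1)) := by
          rw [heq]; exact (undo _ _).symm
        exact ⟨i.val + j.val*(d-1), by rw [h5, mul_lpow_add hbol]⟩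
      have hq : q = q' := by
        have h1 : Quotient.mk s q.out = Quotient.mk s q'.out := Quotient.sound hr
        rwa [Quotient.out_eq, Quotient.out_eq] at h1
      subst hq
      have hij : lpow x i.val = lpow x j.val := mul_left_cancelQ q.out heq
      exact Prod.ext rfl (Fin.ext (hpowinj _ _ i.isLt j.isLt hij))
    · intro y
      have hr : s.r ((Quotient.mk s y).out) y := by
        have h1 : Quotient.mk s ((Quotient.mk s y).out) = Quotient.mk s y :=
          Quotient.out_eq _
        exact Quotient.exact h1
      obtain ⟨n, hn⟩ := hr
      refine ⟨⟨Quotient.mk s y, ⟨n % d, Nat.mod_lt _ hd⟩⟩, ?_⟩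
      simp only
      rw [← lpow_mod hbol x h1 n, ← hn]
  have hcard := Nat.card_eq_of_bijective _ hbij
  rw [Nat.card_prod, Nat.card_eq_fintype_card (α := Fin d), Fintype.card_fin] at hcard
  exact ⟨_, by rw [← hcard]; ring⟩

end Orbit

section Exp3
variable {B : Type*} [QLoop B] (hbol : IsRightBol B) (h3 : ∀ y : B, lpow y 3 = 1)
include hbol h3

lemma sq_sq (x : B) : (x * x) * (x * x) = x := by
  calc (x*x)*(x*x) = Rt (x*x) (x*x) := rfl
    _ = (Rt x) ((Rt x) (x*x)) := by rw [Rt_sq hbol]; rfl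
    _ = ((x*x)*x)*x := rfl
    _ = x := by rw [← lpow_three, h3, q_one_mul]

lemma Rt_cube (x : B) : (Rt x)^3 = 1 := by
  rw [← Rt_lpow hbol, h3, Rt_one]

lemma Eperm (v w : B) :
    Rt w * Rt v * Rt w * Rt v * Rt w = Rt (v * v) := by
  have F1 : ∀ u w' : B, Rt u * Rt (w'*w') * Rt u * Rt (w'*w') * Rt u = Rt w' := by
    intro u w'
    set A := Rt w' with hA
    set M := Rt u with hM
    have hA3 : A^3 = 1 := Rt_cube hbol h3 w'
    have hk : A * M * A = Rt ((w' * u) * w') := bolR hbol w' u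
    have hk3 : (A * M * A)^3 = 1 := by
      rw [hk, ← Rt_lpow hbol, h3, Rt_one]
    have e3 : (A*M*A)^3 = (A*M*A)*(A*M*A)*(A*M*A) := by rw [pow_succ, pow_two]
    have hX : M*(A*A)*M*(A*A)*M = A⁻¹ * A⁻¹ := by
      calc M*(A*A)*M*(A*A)*M = A⁻¹ * ((A*M*A)*(A*M*A)*(A*M*A)) * A⁻¹ := by group
        _ = A⁻¹ * A⁻¹ := by rw [← e3, hk3]; group
    have hA3' : A*A*A = 1 := by rw [← pow_two, ← pow_succ]; exact hA3
    have h4 : A⁻¹ * A⁻¹ = A := by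
      calc A⁻¹ * A⁻¹ = A * (A*A*A)⁻¹ := by group
        _ = A := by rw [hA3', inv_one, mul_one]
    have hAA : A * A = Rt (w' * w') := (Rt_sq hbol w').symm
    rw [← hAA]
    rw [hX, h4]
  have := F1 w (v*v)
  rw [sq_sq hbol h3 v] at this
  exact this

lemma keyE (v w p : B) : ((((p*w)*v)*w)*v)*w = p*(v*v) := by
  have h := Eperm hbol h3 v w
  calc ((((p*w)*v)*w)*v)*w = (Rt w * Rt v * Rt w * Rt v * Rt w) p := by
        simp [Equiv.Perm.mul_apply]
    _ = Rt (v*v) p := by rw [h]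
    _ = p*(v*v) := rfl

end Exp3
section Coords

def pwB {B : Type*} [QLoop B] (x : B) (i : ZMod 3) : B := lpow x i.val

variable {B : Type*} [QLoop B] (hbol : IsRightBol B) (h3 : ∀ y : B, lpow y 3 = 1)

lemma pw_zero (x : B) : pwB x 0 = 1 := rfl
lemma pw_one (x : B) : pwB x 1 = x := lpow_one' x
lemma pw_two (x : B) : pwB x 2 = x * x := lpow_two x

include hbol h3

lemma mul_pw (u x : B) (i j : ZMod 3) :
    (u * pwB x i) * pwB x j = u * pwB x (i + j) := by
  unfold pwB
  rw [mul_lpow_add hbol, ZMod.val_add, ← lpow_mod hbol x (h3 x)]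

lemma pw_mul (x : B) (i j : ZMod 3) :
    pwB x i * pwB x j = pwB x (i + j) := by
  have := mul_pw hbol h3 1 x i j
  rwa [q_one_mul, q_one_mul] at this

lemma pw_succ (x : B) (i : ZMod 3) : pwB x (i + 1) = pwB x i * x := by
  rw [← pw_mul hbol h3 x i 1, pw_one]

lemma mul_sq (p x : B) : p * (x * x) = (p * x) * x := by
  have : Rt (x*x) p = (Rt x * Rt x) p := by rw [Rt_sq hbol]
  simpa using this

end Coords

section E3
variable {B : Type*} [QLoop B] (hbol : IsRightBol B) (h3 : ∀ y : B, lpow y 3 = 1)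
  (h9 : Nat.card B = 9)

/-- coordinates -/
def eB (a b : B) (i j : ZMod 3) : B := pwB a i * pwB b j

include hbol h3

lemma sq_ne_one {a : B} (ha : a ≠ 1) : a * a ≠ 1 := by
  intro h
  have := sq_sq hbol h3 a
  rw [h, q_one_mul] at this
  exact ha this.symm

lemma pw_a_inj {a : B} (ha : a ≠ 1) {i j : ZMod 3} (h : pwB a i = pwB a j) : i = j := by
  have haa : a ≠ a * a := by
    intro h'
    have : 1 * a = a * a := by rw [q_one_mul]; exact h'
    exact ha (mul_right_cancelQ a this)
  have h2 := sq_ne_one hbol h3 ha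
  have tri : ∀ r : ZMod 3, r = 0 ∨ r = 1 ∨ r = 2 := by decide
  rcases tri i with rfl | rfl | rfl <;> rcases tri j with rfl | rfl | rfl <;>
    simp_all [pw_zero, pw_one, pw_two]

end E3

section E3b
variable {B : Type*} [QLoop B] (hbol : IsRightBol B) (h3 : ∀ y : B, lpow y 3 = 1)

include hbol h3

lemma b_pow_notin {a b : B} (hb : b ∉ ({1, a, a*a} : Set B)) :
    ∀ m : ZMod 3, m ≠ 0 → ∀ r : ZMod 3, pwB b m ≠ pwB a r := by
  have hmem : ∀ r : ZMod 3, pwB a r ∈ ({1, a, a*a} : Set B) := by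
    intro r
    have tri : ∀ r : ZMod 3, r = 0 ∨ r = 1 ∨ r = 2 := by decide
    rcases tri r with rfl | rfl | rfl
    · rw [pw_zero]; simp
    · rw [pw_one]; simp
    · rw [pw_two]; simp
  intro m hm r heq
  have tri : m = 1 ∨ m = 2 := by
    have : ∀ m : ZMod 3, m ≠ 0 → m = 1 ∨ m = 2 := by decide
    exact this m hm
  rcases tri with rfl | rfl
  · rw [pw_one] at heq; exact hb (heq ▸ hmem r)
  · -- b*b = pwB a r  ⟹  b = pwB a (r+r)
    rw [pw_two] at heq
    have hb2 : b = pwB a r * pwB a r := by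
      rw [← heq]; exact (sq_sq hbol h3 b).symm
    rw [pw_mul hbol h3] at hb2
    exact hb (hb2 ▸ hmem (r+r))

lemma e_inj {a b : B} (ha : a ≠ 1) (hb : b ∉ ({1, a, a*a} : Set B))
    {i j k l : ZMod 3} (h : eB a b i j = eB a b k l) : i = k ∧ j = l := by
  unfold eB at h
  have h2 : pwB a i * pwB b (j + -l) = pwB a k := by
    have := congrArg (fun y => y * pwB b (-l)) h
    rw [mul_pw hbol h3, mul_pw hbol h3, add_neg_cancel, pw_zero, q_mul_one] at this
    exact this
  by_cases hjl : j = l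
  · subst hjl
    rw [add_neg_cancel, pw_zero, q_mul_one] at h2
    exact ⟨pw_a_inj hbol h3 ha h2, rfl⟩
  · exfalso
    have hm : j + -l ≠ 0 := by
      intro h0; exact hjl (by linear_combination (norm := ring_nf) h0)
    have h3' : pwB a k = pwB a i * pwB a (k + -i) := by
      rw [pw_mul hbol h3]; ring_nf
    rw [h3'] at h2
    have := mul_left_cancelQ _ h2
    exact b_pow_notin hbol h3 hb _ hm _ this

lemma e_surj {a b : B} (h9 : Nat.card B = 9) (ha : a ≠ 1)
    (hb : b ∉ ({1, a, a*a} : Set B)) :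
    ∀ y : B, ∃ p : ZMod 3 × ZMod 3, eB a b p.1 p.2 = y := by
  have hfin : Finite B := Nat.finite_of_card_ne_zero (by omega)
  have hinj : Function.Injective (fun p : ZMod 3 × ZMod 3 => eB a b p.1 p.2) := by
    rintro ⟨i, j⟩ ⟨k, l⟩ h
    obtain ⟨h1, h2⟩ := e_inj hbol h3 ha hb h
    exact Prod.ext h1 h2
  have hbij := (Nat.bijective_iff_injective_and_card _).mpr
    ⟨hinj, by rw [Nat.card_prod, Nat.card_zmod, h9]⟩
  exact fun y => hbij.2 y

end E3b

lemma zmod3_shift : ∀ f : ZMod 3 → ZMod 3, (∀ i j, f i = f j → i = j) → (∀ i, f i ≠ i) →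
    ∃ c, c ≠ 0 ∧ ∀ i, f i = i + c := by decide

section E3c
variable {B : Type*} [QLoop B] (hbol : IsRightBol B) (h3 : ∀ y : B, lpow y 3 = 1)
  {a b : B} (h9 : Nat.card B = 9) (ha : a ≠ 1) (hb : b ∉ ({1, a, a*a} : Set B))

include hbol h3 h9 ha hb

lemma e_mult : ∀ i j k l : ZMod 3, eB a b i j * eB a b k l = eB a b (i+k) (j+l) := by
  have einj : ∀ {i j k l : ZMod 3}, eB a b i j = eB a b k l → i = k ∧ j = l :=
    fun h => e_inj hbol h3 ha hb h
  have esurj := e_surj hbol h3 h9 ha hb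
  have he0 : ∀ i : ZMod 3, eB a b i 0 = pwB a i := by
    intro i; unfold eB; rw [pw_zero, q_mul_one]
  have hs0 : ∀ i : ZMod 3, eB a b i 0 * a = eB a b (i+1) 0 := by
    intro i
    have h5 := pw_mul hbol h3 a i 1
    rw [pw_one] at h5
    rw [he0, he0, h5]
  have heb : ∀ i j : ZMod 3, eB a b i j * b = eB a b i (j+1) := by
    intro i j
    have h5 := mul_pw hbol h3 (pwB a i) b j 1
    rw [pw_one] at h5
    exact h5
  have hKEY : ∀ p : B, ((((p*b)*a)*b)*a)*b = p*(a*a) := fun p => keyE hbol h3 a b p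
  have hRHS : ∀ i : ZMod 3, eB a b i 0 * (a*a) = eB a b (i+2) 0 := by
    intro i
    rw [he0, he0, ← pw_two (x := a), pw_mul hbol h3]
  -- column 1 is preserved by right translation by a
  have col1 : ∀ i : ZMod 3, ∃ k, eB a b i 1 * a = eB a b k 1 := by
    intro i
    obtain ⟨⟨m, n⟩, hmn⟩ := esurj (eB a b i 1 * a)
    simp only at hmn
    have tri : n = 0 ∨ n = 1 ∨ n = 2 := by
      have : ∀ r : ZMod 3, r = 0 ∨ r = 1 ∨ r = 2 := by decide
      exact this n
    rcases tri with rfl | rfl | rfl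
    · exfalso
      have h5 : eB a b (m - 1) 0 * a = eB a b m 0 := by
        rw [hs0]; congr 1; ring
      rw [hmn] at h5
      have h6 := mul_right_cancelQ a h5
      have := (einj h6).2
      exact absurd this (by decide)
    · exact ⟨m, hmn.symm⟩
    · exfalso
      have hch := hKEY (eB a b i 0)
      rw [heb, show (0:ZMod 3)+1 = 1 from by decide] at hch
      rw [hmn.symm] at hch
      rw [heb, show (2:ZMod 3)+1 = 0 from by decide] at hch
      rw [hs0, heb, hRHS] at hch
      have := (einj hch).2
      exact absurd this (by decide)
  choose f1 hf1 using col1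
  have hf1inj : ∀ i j, f1 i = f1 j → i = j := by
    intro i j hij
    have : eB a b i 1 * a = eB a b j 1 * a := by rw [hf1, hf1, hij]
    have h6 := mul_right_cancelQ a this
    exact ((einj h6).1).symm
  have hf1nf : ∀ i, f1 i ≠ i := by
    intro i hfix
    have : eB a b i 1 * a = eB a b i 1 * 1 := by
      rw [q_mul_one, hf1, hfix]
    exact ha (mul_left_cancelQ _ this)
  obtain ⟨c1, hc1ne, hc1⟩ := zmod3_shift f1 hf1inj hf1nf
  have hcol1 : ∀ i : ZMod 3, eB a b i 1 * a = eB a b (i + c1) 1 := by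
    intro i; rw [hf1, hc1]
  -- column 2 is preserved
  have col2 : ∀ i : ZMod 3, ∃ k, eB a b i 2 * a = eB a b k 2 := by
    intro i
    obtain ⟨⟨m, n⟩, hmn⟩ := esurj (eB a b i 2 * a)
    simp only at hmn
    have tri : n = 0 ∨ n = 1 ∨ n = 2 := by
      have : ∀ r : ZMod 3, r = 0 ∨ r = 1 ∨ r = 2 := by decide
      exact this n
    rcases tri with rfl | rfl | rfl
    · exfalso
      have h5 : eB a b (m - 1) 0 * a = eB a b m 0 := by
        rw [hs0]; congr 1; ring
      rw [hmn] at h5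
      have h6 := mul_right_cancelQ a h5
      have := (einj h6).2
      exact absurd this (by decide)
    · exfalso
      have h5 : eB a b (m - c1) 1 * a = eB a b m 1 := by
        rw [hcol1]; congr 1; ring
      rw [hmn] at h5
      have h6 := mul_right_cancelQ a h5
      have := (einj h6).2
      exact absurd this (by decide)
    · exact ⟨m, hmn.symm⟩
  choose f2 hf2 using col2
  have hf2inj : ∀ i j, f2 i = f2 j → i = j := by
    intro i j hij
    have : eB a b i 2 * a = eB a b j 2 * a := by rw [hf2, hf2, hij]
    have h6 := mul_right_cancelQ a this
    exact ((einj h6).1).symm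
  have hf2nf : ∀ i, f2 i ≠ i := by
    intro i hfix
    have : eB a b i 2 * a = eB a b i 2 * 1 := by
      rw [q_mul_one, hf2, hfix]
    exact ha (mul_left_cancelQ _ this)
  obtain ⟨c2, hc2ne, hc2⟩ := zmod3_shift f2 hf2inj hf2nf
  have hcol2 : ∀ i : ZMod 3, eB a b i 2 * a = eB a b (i + c2) 2 := by
    intro i; rw [hf2, hc2]
  -- c1 + c2 = 2, hence c1 = c2 = 1
  have hcsum : c1 + c2 = 2 := by
    have hch := hKEY (eB a b 0 0)
    rw [heb, show (0:ZMod 3)+1 = 1 from by decide] at hch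
    rw [hcol1, heb, show (1:ZMod 3)+1 = 2 from by decide] at hch
    rw [hcol2, heb, show (2:ZMod 3)+1 = 0 from by decide] at hch
    rw [hRHS, show (0:ZMod 3)+2 = 2 from by decide] at hch
    have h6 := (einj hch).1
    rw [show (0:ZMod 3)+c1+c2 = c1+c2 from by ring] at h6
    exact h6
  have hc1c2 : c1 = 1 ∧ c2 = 1 := by
    have : ∀ c d : ZMod 3, c ≠ 0 → d ≠ 0 → c + d = 2 → c = 1 ∧ d = 1 := by decide
    exact this c1 c2 hc1ne hc2ne hcsum
  -- the full shift
  have hea : ∀ i j : ZMod 3, eB a b i j * a = eB a b (i+1) j := by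
    intro i j
    have tri : j = 0 ∨ j = 1 ∨ j = 2 := by
      have : ∀ r : ZMod 3, r = 0 ∨ r = 1 ∨ r = 2 := by decide
      exact this j
    rcases tri with rfl | rfl | rfl
    · exact hs0 i
    · rw [hcol1, hc1c2.1]
    · rw [hcol2, hc1c2.2]
  have hea_pw : ∀ (i j r : ZMod 3), eB a b i j * pwB a r = eB a b (i+r) j := by
    intro i j r
    have tri : r = 0 ∨ r = 1 ∨ r = 2 := by
      have : ∀ r : ZMod 3, r = 0 ∨ r = 1 ∨ r = 2 := by decide
      exact this r
    rcases tri with rfl | rfl | rfl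
    · rw [pw_zero, q_mul_one, add_zero]
    · rw [pw_one, hea]
    · rw [pw_two, mul_sq hbol h3, hea, hea]; congr 1; ring
  have heb_pw : ∀ (i j r : ZMod 3), eB a b i j * pwB b r = eB a b i (j+r) := by
    intro i j r
    have tri : r = 0 ∨ r = 1 ∨ r = 2 := by
      have : ∀ r : ZMod 3, r = 0 ∨ r = 1 ∨ r = 2 := by decide
      exact this r
    rcases tri with rfl | rfl | rfl
    · rw [pw_zero, q_mul_one, add_zero]
    · rw [pw_one, heb]
    · rw [pw_two, mul_sq hbol h3, heb, heb]; congr 1; ring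
  -- the multiplication table
  intro i j k l
  have hu : pwB b (-l) * pwB a k = eB a b k (-l) := by
    have : eB a b 0 (-l) = pwB b (-l) := by
      unfold eB; rw [pw_zero, q_one_mul]
    rw [← this, hea_pw, zero_add]
  have huwu : (pwB b (-l) * pwB a k) * pwB b (-l) = eB a b k l := by
    rw [hu, heb_pw]
    congr 1
    have : ∀ l : ZMod 3, -l + -l = l := by decide
    rw [this]
  have hb1 := hbol (eB a b i j) (pwB b (-l)) (pwB a k)
  rw [huwu] at hb1
  rw [heb_pw, hea_pw, heb_pw] at hb1
  rw [← hb1]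
  congr 1
  have : ∀ j l : ZMod 3, j + -l + -l = j + l := by decide
  rw [this]

end E3c

theorem bol9 (B : Type*) [QLoop B] (hbol : IsRightBol B) (h9 : Nat.card B = 9) :
    (∀ u v : B, u * v = v * u) ∧ (∀ u v w : B, u * (v * w) = (u * v) * w) := by
  have hfin : Finite B := Nat.finite_of_card_ne_zero (by omega)
  by_cases hA : ∀ y : B, lpow y 3 = 1
  · -- exponent 3 case
    have hnt : Nontrivial B := Finite.one_lt_card_iff_nontrivial.mp (by omega)
    obtain ⟨a, ha⟩ := exists_ne (1 : B)
    have hbex : ∃ y : B, y ∉ ({1, a, a*a} : Set B) := by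
      by_contra hall
      push_neg at hall
      have hsub : (Set.univ : Set B) ⊆ {1, a, a*a} := fun y _ => hall y
      have hle := Set.ncard_le_ncard hsub (Set.toFinite _)
      rw [Set.ncard_univ, h9] at hle
      have h3le : ({1, a, a*a} : Set B).ncard ≤ 3 := by
        calc ({1, a, a*a} : Set B).ncard
            ≤ ({a, a*a} : Set B).ncard + 1 := Set.ncard_insert_le _ _
          _ ≤ (({a*a} : Set B).ncard + 1) + 1 := by
              have := Set.ncard_insert_le (a) ({a*a} : Set B)
              omega
          _ ≤ 3 := by rw [Set.ncard_singleton]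
      omega
    obtain ⟨b, hb⟩ := hbex
    have hmult := e_mult hbol hA h9 ha hb
    have hsurj := e_surj hbol hA h9 ha hb
    constructor
    · intro u v
      obtain ⟨⟨i, j⟩, rfl⟩ := hsurj u
      obtain ⟨⟨k, l⟩, rfl⟩ := hsurj v
      simp only
      rw [hmult, hmult, add_comm i k, add_comm j l]
    · intro u v w
      obtain ⟨⟨i, j⟩, rfl⟩ := hsurj u
      obtain ⟨⟨k, l⟩, rfl⟩ := hsurj v
      obtain ⟨⟨m, n⟩, rfl⟩ := hsurj w
      simp only
      rw [hmult, hmult, hmult, hmult, add_assoc, add_assoc]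
  · -- there is an element of order 9
    push_neg at hA
    obtain ⟨x, hx⟩ := hA
    obtain ⟨n0, hn0pos, hn0⟩ := exists_pos_order hbol x
    have hex : ∃ n, 0 < n ∧ lpow x n = 1 := ⟨n0, hn0pos, hn0⟩
    classical
    let d := Nat.find hex
    have hdspec : 0 < d ∧ lpow x d = 1 := Nat.find_spec hex
    have hdmin : ∀ m, 0 < m → m < d → lpow x m ≠ 1 := by
      intro m hm hmd h1
      exact Nat.find_min hex hmd ⟨hm, h1⟩
    have hdvd : d ∣ 9 := by
      have := order_dvd_card hbol x hdspec.1 hdspec.2 hdmin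
      rwa [h9] at this
    have hd9 : d = 9 := by
      have hd1 : d ≠ 1 := by
        intro h1
        have : lpow x 1 = 1 := by rw [← h1]; exact hdspec.2
        rw [lpow_one'] at this
        subst this
        apply hx
        rw [lpow_three, q_one_mul, q_one_mul]
      have hd3 : d ≠ 3 := by
        intro h1
        exact hx (by rw [← h1]; exact hdspec.2)
      have hle : d ≤ 9 := Nat.le_of_dvd (by norm_num) hdvd
      interval_cases d <;> first | rfl | (exfalso; revert hdvd; decide) | omega
    -- powers of x enumerate B
    have hpowinj : ∀ i j : ℕ, i < d → j < d → lpow x i = lpow x j → i = j := by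
      intro i j hi hj hij
      rcases le_total i j with h | h
      · by_contra hne
        have : lpow x j = lpow x i * lpow x (j - i) := by
          rw [← lpow_add hbol]; congr 1; omega
        rw [← hij] at this
        have h2 : lpow x i * 1 = lpow x i * lpow x (j-i) := by rw [q_mul_one]; exact this
        exact hdmin (j-i) (by omega) (by omega) (mul_left_cancelQ _ h2).symm
      · by_contra hne
        have : lpow x i = lpow x j * lpow x (i - j) := by
          rw [← lpow_add hbol]; congr 1; omega
        rw [hij] at this
        have h2 : lpow x j * 1 = lpow x j * lpow x (i-j) := by rw [q_mul_one]; exact this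
        exact hdmin (i-j) (by omega) (by omega) (mul_left_cancelQ _ h2).symm
    have hinj : Function.Injective (fun i : Fin 9 => lpow x i.val) := by
      intro i j hij
      have hi := i.isLt
      have hj := j.isLt
      exact Fin.ext (hpowinj i.val j.val (by omega) (by omega) hij)
    have hbij := (Nat.bijective_iff_injective_and_card _).mpr
      ⟨hinj, by rw [Nat.card_eq_fintype_card (α := Fin 9), Fintype.card_fin, h9]⟩
    constructor
    · intro u v
      obtain ⟨i, rfl⟩ := hbij.2 u
      obtain ⟨j, rfl⟩ := hbij.2 v
      simp only
      rw [← lpow_add hbol, ← lpow_add hbol, Nat.add_comm]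
    · intro u v w
      obtain ⟨i, rfl⟩ := hbij.2 u
      obtain ⟨j, rfl⟩ := hbij.2 v
      obtain ⟨k, rfl⟩ := hbij.2 w
      simp only
      rw [← lpow_add hbol, ← lpow_add hbol, ← lpow_add hbol, ← lpow_add hbol,
        Nat.add_assoc]

section Center

variable {Q : Type*} [QLoop Q]

lemma cen_comm {c : Q} (hc : c ∈ loopCenter Q) (y : Q) : c * y = y * c := (hc y 1).1
lemma cen_a2 {c : Q} (hc : c ∈ loopCenter Q) (y z : Q) : c*(y*z) = (c*y)*z := (hc y z).2.1
lemma cen_a3 {c : Q} (hc : c ∈ loopCenter Q) (y z : Q) : y*(c*z) = (y*c)*z := (hc y z).2.2.1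
lemma cen_a4 {c : Q} (hc : c ∈ loopCenter Q) (y z : Q) : y*(z*c) = (y*z)*c := (hc y z).2.2.2

lemma one_mem_center : (1 : Q) ∈ loopCenter Q := by
  intro y z
  refine ⟨?_, ?_, ?_, ?_⟩
  · rw [q_one_mul, q_mul_one]
  · rw [q_one_mul, q_one_mul]
  · rw [q_one_mul, q_mul_one]
  · rw [q_mul_one, q_mul_one]

lemma cen_mul {c d : Q} (hc : c ∈ loopCenter Q) (hd : d ∈ loopCenter Q) :
    c * d ∈ loopCenter Q := by
  intro y z
  refine ⟨?_, ?_, ?_, ?_⟩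
  · calc (c*d)*y = c*(d*y) := (cen_a2 hc d y).symm
      _ = c*(y*d) := by rw [cen_comm hd y]
      _ = (c*y)*d := cen_a2 hc y d
      _ = (y*c)*d := by rw [cen_comm hc y]
      _ = y*(c*d) := (cen_a3 hc y d).symm
  · calc (c*d)*(y*z) = c*(d*(y*z)) := (cen_a2 hc d (y*z)).symm
      _ = c*((d*y)*z) := by rw [cen_a2 hd y z]
      _ = (c*(d*y))*z := cen_a2 hc (d*y) z
      _ = ((c*d)*y)*z := by rw [cen_a2 hc d y]
  · calc y*((c*d)*z) = y*(c*(d*z)) := by rw [← cen_a2 hc d z]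
      _ = (y*c)*(d*z) := cen_a3 hc y (d*z)
      _ = ((y*c)*d)*z := cen_a3 hd (y*c) z
      _ = (y*(c*d))*z := by rw [cen_a3 hc y d]
  · calc y*(z*(c*d)) = y*((z*c)*d) := by rw [cen_a3 hc z d]
      _ = (y*(z*c))*d := cen_a4 hd y (z*c)
      _ = ((y*z)*c)*d := by rw [cen_a4 hc y z]
      _ = (y*z)*(c*d) := (cen_a3 hc (y*z) d).symm

lemma cen_inv [Finite Q] {c : Q} (hc : c ∈ loopCenter Q) :
    ∃ d ∈ loopCenter Q, c * d = 1 := by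
  classical
  have hinj : Function.Injective
      (fun z : {x // x ∈ loopCenter Q} => (⟨c * z.val, cen_mul hc z.2⟩ :
        {x // x ∈ loopCenter Q})) := by
    rintro ⟨z, hz⟩ ⟨w, hw⟩ h
    have : c * z = c * w := congrArg Subtype.val h
    exact Subtype.ext (mul_left_cancelQ c this)
  have hsurj := Finite.injective_iff_surjective.mp hinj
  obtain ⟨⟨d, hd⟩, hd1⟩ := hsurj ⟨1, one_mem_center⟩
  exact ⟨d, hd, congrArg Subtype.val hd1⟩

def cenSetoid (Q : Type*) [QLoop Q] [Finite Q] : Setoid Q :=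
  ⟨fun x y => ∃ c ∈ loopCenter Q, x = y * c, by
    constructor
    · intro x; exact ⟨1, one_mem_center, (q_mul_one x).symm⟩
    · rintro x y ⟨c, hc, rfl⟩
      obtain ⟨d, hd, hcd⟩ := cen_inv hc
      refine ⟨d, hd, ?_⟩
      rw [← cen_a3 hc y d, hcd, q_mul_one]
    · rintro x y z ⟨c, hc, rfl⟩ ⟨d, hd, rfl⟩
      exact ⟨d * c, cen_mul hd hc, (cen_a3 hd z c).symm⟩⟩

def CQ (Q : Type*) [QLoop Q] [Finite Q] := Quotient (cenSetoid Q)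

variable [Finite Q]

noncomputable instance : QLoop (CQ Q) where
  mul := Quotient.map₂ (· * ·) (by
    rintro a a' ⟨c, hc, rfl⟩ b b' ⟨d, hd, rfl⟩
    refine ⟨c * d, cen_mul hc hd, ?_⟩
    calc (a'*c)*(b'*d) = a'*(c*(b'*d)) := (cen_a3 hc a' (b'*d)).symm
      _ = a'*((c*b')*d) := by rw [cen_a2 hc b' d]
      _ = a'*((b'*c)*d) := by rw [cen_comm hc b']
      _ = a'*(b'*(c*d)) := by rw [← cen_a3 hc b' d]
      _ = (a'*b')*(c*d) := cen_a4 (cen_mul hc hd) a' b')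
  one := Quotient.mk (cenSetoid Q) 1
  one_mul := by
    intro x
    induction x using Quotient.ind with
    | _ u => exact congrArg (Quotient.mk (cenSetoid Q)) (q_one_mul u)
  mul_one := by
    intro x
    induction x using Quotient.ind with
    | _ u => exact congrArg (Quotient.mk (cenSetoid Q)) (q_mul_one u)
  bij_left := by
    intro aq
    induction aq using Quotient.ind with
    | _ u =>
      constructor
      · intro xq yq h
        induction xq using Quotient.ind with
        | _ x =>
        induction yq using Quotient.ind with
        | _ y =>
        obtain ⟨c, hc, hcx⟩ := Quotient.exact h
        have hcx' : u * x = (u * y) * c := hcx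
        have : u * x = u * (y * c) := by rw [hcx', ← cen_a4 hc u y]
        exact Quotient.sound ⟨c, hc, mul_left_cancelQ u this⟩
      · intro bq
        induction bq using Quotient.ind with
        | _ v =>
          obtain ⟨w, hw⟩ := (QLoop.bij_left u).2 v
          exact ⟨Quotient.mk (cenSetoid Q) w,
            congrArg (Quotient.mk (cenSetoid Q)) hw⟩
  bij_right := by
    intro aq
    induction aq using Quotient.ind with
    | _ u =>
      constructor
      · intro xq yq h
        induction xq using Quotient.ind with
        | _ x =>
        induction yq using Quotient.ind with
        | _ y =>
        obtain ⟨c, hc, hcx⟩ := Quotient.exact h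
        have hcx' : x * u = (y * u) * c := hcx
        have : x * u = (y * c) * u := by
          rw [hcx', ← cen_a4 hc y u, ← cen_comm hc u, cen_a3 hc y u]
        exact Quotient.sound ⟨c, hc, (mul_right_cancelQ u this).symm⟩
      · intro bq
        induction bq using Quotient.ind with
        | _ v =>
          obtain ⟨w, hw⟩ := (QLoop.bij_right u).2 v
          exact ⟨Quotient.mk (cenSetoid Q) w,
            congrArg (Quotient.mk (cenSetoid Q)) hw⟩

lemma CQ_mk_mul (u v : Q) :
    @HMul.hMul (CQ Q) (CQ Q) (CQ Q) _ (Quotient.mk (cenSetoid Q) u)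
      (Quotient.mk (cenSetoid Q) v) = Quotient.mk (cenSetoid Q) (u * v) := rfl

lemma CQ_bol (hbol : IsRightBol Q) : IsRightBol (CQ Q) := by
  intro xq yq zq
  induction xq using Quotient.ind with
  | _ x =>
  induction yq using Quotient.ind with
  | _ y =>
  induction zq using Quotient.ind with
  | _ z =>
  exact congrArg (Quotient.mk (cenSetoid Q)) (hbol x y z)

lemma CQ_card : Nat.card Q = Nat.card (CQ Q) * (loopCenter Q).ncard := by
  classical
  have hbij : Function.Bijective
      (fun p : CQ Q × {x // x ∈ loopCenter Q} => p.1.out * p.2.val) := by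
    constructor
    · rintro ⟨q, c, hc⟩ ⟨q', c', hc'⟩ heq
      simp only at heq
      obtain ⟨d, hd, hcd⟩ := cen_inv hc
      have h1 : q.out = q'.out * (c' * d) := by
        rw [cen_a3 hc' q'.out d, ← heq, ← cen_a3 hc q.out d, hcd, q_mul_one]
      have hq : q = q' := by
        have := Quotient.sound (s := cenSetoid Q) ⟨c' * d, cen_mul hc' hd, h1⟩
        exact (Quotient.out_eq q).symm.trans (this.trans (Quotient.out_eq q'))
      subst hq
      have : c = c' := mul_left_cancelQ q.out heq
      simp [this]
    · intro y
      have h1 : Quotient.mk (cenSetoid Q) ((Quotient.mk (cenSetoid Q) y).out)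
          = Quotient.mk (cenSetoid Q) y := Quotient.out_eq _
      obtain ⟨c, hc, hyc⟩ := Quotient.exact h1
      obtain ⟨d, hd, hcd⟩ := cen_inv hc
      refine ⟨⟨Quotient.mk (cenSetoid Q) y, ⟨d, hd⟩⟩, ?_⟩
      simp only
      rw [hyc, ← cen_a3 hc y d, hcd, q_mul_one]
  have := Nat.card_eq_of_bijective _ hbij
  rw [Nat.card_prod, Nat.card_coe_set_eq] at this
  exact this.symm

end Center

/-- In a right Bol loop of order 27 with center of order 3, any normal
subloop with abelian quotient contains the center. -/
theorem stmt11 (Q : Type*) [QLoop Q] (hbol : IsRightBol Q)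
    (hcard : Nat.card Q = 27) (hZ : (loopCenter Q).ncard = 3)
    (N : Set Q) (hN : IsNormalSubloop N)
    (hab : ∀ x y z : Q, (∃ n ∈ N, y * x = (x * y) * n) ∧
      (∃ m ∈ N, x * (y * z) = ((x * y) * z) * m)) :
    loopCenter Q ⊆ N := by
  classical
  have hfin : Finite Q := Nat.finite_of_card_ne_zero (by omega)
  have hcardCQ : Nat.card (CQ Q) = 9 := by
    have h := CQ_card (Q := Q)
    rw [hcard, hZ] at h
    omega
  obtain ⟨hcomm, hassoc⟩ := bol9 (CQ Q) (CQ_bol hbol) hcardCQ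
  have hcommZ : ∀ u y : Q, ∃ c ∈ loopCenter Q, y * u = (u * y) * c := by
    intro u y
    have h := hcomm (Quotient.mk (cenSetoid Q) y) (Quotient.mk (cenSetoid Q) u)
    rw [CQ_mk_mul, CQ_mk_mul] at h
    exact Quotient.exact h
  have hassocZ : ∀ u y z : Q, ∃ c ∈ loopCenter Q, u * (y * z) = ((u * y) * z) * c := by
    intro u y z
    have h := hassoc (Quotient.mk (cenSetoid Q) u) (Quotient.mk (cenSetoid Q) y)
      (Quotient.mk (cenSetoid Q) z)
    rw [CQ_mk_mul, CQ_mk_mul, CQ_mk_mul, CQ_mk_mul] at h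
    exact Quotient.exact h
  have hne : ∃ u : Q, u ∉ loopCenter Q := by
    by_contra hall
    push_neg at hall
    have hsub : (Set.univ : Set Q) ⊆ loopCenter Q := fun y _ => hall y
    have hle := Set.ncard_le_ncard hsub (Set.toFinite _)
    rw [Set.ncard_univ, hcard, hZ] at hle
    omega
  obtain ⟨u, hu⟩ := hne
  have htEx : ∃ t : Q, t ∈ loopCenter Q ∧ t ∈ N ∧ t ≠ 1 := by
    have hu' : ¬ ∀ y z : Q, u * y = y * u ∧ u * (y * z) = (u * y) * z ∧
        y * (u * z) = (y * u) * z ∧ y * (z * u) = (y * z) * u := hu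
    push_neg at hu'
    obtain ⟨y, z, hyz⟩ := hu'
    by_cases hP1 : u * y = y * u
    case neg =>
      obtain ⟨n, hnN, hn⟩ := (hab u y y).1
      obtain ⟨c, hcZ, hc⟩ := hcommZ u y
      have hnc : n = c := mul_left_cancelQ (u*y) (by rw [← hn, ← hc])
      refine ⟨n, by rw [hnc]; exact hcZ, hnN, ?_⟩
      intro h1
      rw [h1, q_mul_one] at hn
      exact hP1 hn.symm
    by_cases hP2 : u * (y * z) = (u * y) * z
    case neg =>
      obtain ⟨m, hmN, hm⟩ := (hab u y z).2
      obtain ⟨c, hcZ, hc⟩ := hassocZ u y z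
      have hmc : m = c := mul_left_cancelQ ((u*y)*z) (by rw [← hm, ← hc])
      refine ⟨m, by rw [hmc]; exact hcZ, hmN, ?_⟩
      intro h1
      rw [h1, q_mul_one] at hm
      exact hP2 hm
    by_cases hP3 : y * (u * z) = (y * u) * z
    case neg =>
      obtain ⟨m, hmN, hm⟩ := (hab y u z).2
      obtain ⟨c, hcZ, hc⟩ := hassocZ y u z
      have hmc : m = c := mul_left_cancelQ ((y*u)*z) (by rw [← hm, ← hc])
      refine ⟨m, by rw [hmc]; exact hcZ, hmN, ?_⟩
      intro h1
      rw [h1, q_mul_one] at hm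
      exact hP3 hm
    by_cases hP4 : y * (z * u) = (y * z) * u
    case neg =>
      obtain ⟨m, hmN, hm⟩ := (hab y z u).2
      obtain ⟨c, hcZ, hc⟩ := hassocZ y z u
      have hmc : m = c := mul_left_cancelQ ((y*z)*u) (by rw [← hm, ← hc])
      refine ⟨m, by rw [hmc]; exact hcZ, hmN, ?_⟩
      intro h1
      rw [h1, q_mul_one] at hm
      exact hP4 hm
    exact (hyz hP1 hP2 hP3 hP4).elim
  obtain ⟨t, htZ, htN, ht1⟩ := htEx
  have h1t : (1 : Q) ≠ t := ht1.symm
  have httZ : t * t ∈ loopCenter Q := cen_mul htZ htZ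
  have htt1 : t * t ≠ 1 := by
    intro htt
    have hpair : ({1, t} : Set Q) ⊆ loopCenter Q := by
      rintro x (rfl | rfl)
      · exact one_mem_center
      · exact htZ
    have hpaircard : ({1, t} : Set Q).ncard = 2 := Set.ncard_pair h1t
    have hss : ({1, t} : Set Q) ⊂ loopCenter Q := by
      refine ⟨hpair, fun hsub2 => ?_⟩
      have hh := Set.ncard_le_ncard hsub2 (Set.toFinite _)
      rw [hZ, hpaircard] at hh
      omega
    obtain ⟨v, hvZ, hv⟩ := Set.exists_of_ssubset hss
    have hv1 : v ≠ 1 := fun h => hv (by simp [h])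
    have hvt : v ≠ t := fun h => hv (by simp [h])
    have hsub3 : ({1, t, v} : Set Q) ⊆ loopCenter Q := by
      rintro x (rfl | rfl | rfl)
      · exact one_mem_center
      · exact htZ
      · exact hvZ
    have hcard3 : ({1, t, v} : Set Q).ncard = 3 := by
      rw [Set.ncard_insert_of_notMem (by simp [h1t, Ne.symm hv1]) (Set.toFinite _),
        Set.ncard_pair (Ne.symm hvt)]
    have hZeq : ({1, t, v} : Set Q) = loopCenter Q :=
      Set.eq_of_subset_of_ncard_le hsub3 (by rw [hZ, hcard3]) (Set.toFinite _)
    have htv : t * v ∈ ({1, t, v} : Set Q) := by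
      rw [hZeq]; exact cen_mul htZ hvZ
    rcases htv with h | h | h
    · rw [← htt] at h
      exact hvt (mul_left_cancelQ t h)
    · have hh : t * v = t * 1 := by rw [q_mul_one]; exact h
      exact hv1 (mul_left_cancelQ t hh)
    · have hh : t * v = 1 * v := by rw [q_one_mul]; exact h
      exact ht1 (mul_right_cancelQ v hh).symm
  have httt : t ≠ t * t := by
    intro h
    have hh : t * 1 = t * t := by rw [q_mul_one]; exact h
    exact ht1 (mul_left_cancelQ t hh).symm
  have hsub3 : ({1, t, t*t} : Set Q) ⊆ loopCenter Q := by
    rintro x (rfl | rfl | rfl)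
    · exact one_mem_center
    · exact htZ
    · exact httZ
  have hcard3 : ({1, t, t*t} : Set Q).ncard = 3 := by
    rw [Set.ncard_insert_of_notMem (by simp [h1t, Ne.symm htt1]) (Set.toFinite _),
      Set.ncard_pair httt]
  have hZeq : ({1, t, t*t} : Set Q) = loopCenter Q :=
    Set.eq_of_subset_of_ncard_le hsub3 (by rw [hZ, hcard3]) (Set.toFinite _)
  intro z hz
  rw [← hZeq] at hz
  rcases hz with rfl | rfl | rfl
  · exact hN.1.one_mem
  · exact htN
  · exact hN.1.mul_mem htN htN
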